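/- arXiv:1807.08328 — 2 statements merged into one kernel-verified Lean document; each statement's English description precedes it below -/
import Mathlib

section
/- Let $p\in C^1([0,\pi])$ with $p>0$, and let $u_1,u_2$ be eigenfunctions of $-(pu')'+Vu=\lambda u$ with separated boundary conditions, corresponding to the first two eigenvalues $\lambda_1<\lambda_2$, with $u_1>0$ on $(0,\pi)$ and $u_2$ having exactly one zero $x_0\in(0,\pi)$. Then the equation $u_2(x)^2 - u_1(x)^2 = 0$ has at most two solutions in $(0,\pi)$: at most one in $(0,x_0)$ and at most one in $[x_0,\pi)$. -/
open Real Set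

theorem at_most_two_crossings (p p' V u₁ u₂ u₁' u₂' : ℝ → ℝ) (lam₁ lam₂ x₀ : ℝ)
    (hx₀ : x₀ ∈ Set.Ioo (0 : ℝ) π)
    (hp : ∀ x ∈ Set.Icc (0 : ℝ) π, HasDerivAt p (p' x) x)
    (hp' : ContinuousOn p' (Set.Icc (0 : ℝ) π))
    (hppos : ∀ x ∈ Set.Icc (0 : ℝ) π, 0 < p x)
    (hu₁ : ∀ x ∈ Set.Icc (0 : ℝ) π, HasDerivAt u₁ (u₁' x) x)
    (hu₂ : ∀ x ∈ Set.Icc (0 : ℝ) π, HasDerivAt u₂ (u₂' x) x)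
    -- the Sturm–Liouville equations `-(p uⱼ')' + V uⱼ = lamⱼ uⱼ`:
    (hode₁ : ∀ x ∈ Set.Icc (0 : ℝ) π,
      HasDerivAt (fun y => p y * u₁' y) (V x * u₁ x - lam₁ * u₁ x) x)
    (hode₂ : ∀ x ∈ Set.Icc (0 : ℝ) π,
      HasDerivAt (fun y => p y * u₂' y) (V x * u₂ x - lam₂ * u₂ x) x)
    (hlam : lam₁ < lam₂)
    -- separated (self-adjoint) boundary conditions, common to both eigenfunctions:
    (hbc : ∃ α β : ℝ, α ∈ Set.Ico (0 : ℝ) π ∧ β ∈ Set.Ico (0 : ℝ) π ∧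
      (∀ u u' : ℝ → ℝ, (u = u₁ ∧ u' = u₁') ∨ (u = u₂ ∧ u' = u₂') →
        u 0 * Real.cos α - p 0 * u' 0 * Real.sin α = 0 ∧
        u π * Real.cos β - p π * u' π * Real.sin β = 0))
    (hu₁pos : ∀ x ∈ Set.Ioo (0 : ℝ) π, 0 < u₁ x)
    (hu₂pos : ∀ x ∈ Set.Ioo (0 : ℝ) x₀, 0 < u₂ x)
    (hu₂zero : u₂ x₀ = 0)
    (hu₂neg : ∀ x ∈ Set.Ioo x₀ π, u₂ x < 0) :
    Set.Subsingleton {x ∈ Set.Ioo (0 : ℝ) x₀ | u₂ x ^ 2 - u₁ x ^ 2 = 0} ∧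
    Set.Subsingleton {x ∈ Set.Ico x₀ π | u₂ x ^ 2 - u₁ x ^ 2 = 0} := by
  obtain ⟨hx0pos, hx0lt⟩ := hx₀
  have hπ : (0:ℝ) < π := Real.pi_pos
  set W : ℝ → ℝ := fun x => p x * (u₁ x * u₂' x - u₂ x * u₁' x) with hWdef
  -- derivative of W
  have hWderiv : ∀ x ∈ Set.Icc (0:ℝ) π,
      HasDerivAt W ((lam₁ - lam₂) * (u₁ x * u₂ x)) x := by
    intro x hx
    have heq : W = fun y => (p y * u₂' y) * u₁ y - (p y * u₁' y) * u₂ y := by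
      funext y; simp only [hWdef]; ring
    rw [heq]
    have h := ((hode₂ x hx).mul (hu₁ x hx)).sub ((hode₁ x hx).mul (hu₂ x hx))
    exact h.congr_deriv (by ring)
  -- boundary values
  obtain ⟨α, β, hα, hβ, hbcs⟩ := hbc
  obtain ⟨h10, h1π⟩ := hbcs u₁ u₁' (Or.inl ⟨rfl, rfl⟩)
  obtain ⟨h20, h2π⟩ := hbcs u₂ u₂' (Or.inr ⟨rfl, rfl⟩)
  have hW0 : W 0 = 0 := by
    have key : Real.sin α * W 0 = 0 := by
      simp only [hWdef]
      linear_combination (u₂ 0 * h10 - u₁ 0 * h20)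
    rcases eq_or_ne (Real.sin α) 0 with hs | hs
    · have hc : Real.cos α ≠ 0 := by
        intro hc
        have := Real.sin_sq_add_cos_sq α
        rw [hs, hc] at this; norm_num at this
      have h1z : u₁ 0 = 0 := by
        have : u₁ 0 * Real.cos α = 0 := by rw [hs] at h10; linarith
        exact (mul_eq_zero.1 this).resolve_right hc
      have h2z : u₂ 0 = 0 := by
        have : u₂ 0 * Real.cos α = 0 := by rw [hs] at h20; linarith
        exact (mul_eq_zero.1 this).resolve_right hc
      simp [hWdef, h1z, h2z]
    · exact (mul_eq_zero.1 key).resolve_left hs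
  have hWπ : W π = 0 := by
    have key : Real.sin β * W π = 0 := by
      simp only [hWdef]
      linear_combination (u₂ π * h1π - u₁ π * h2π)
    rcases eq_or_ne (Real.sin β) 0 with hs | hs
    · have hc : Real.cos β ≠ 0 := by
        intro hc
        have := Real.sin_sq_add_cos_sq β
        rw [hs, hc] at this; norm_num at this
      have h1z : u₁ π = 0 := by
        have : u₁ π * Real.cos β = 0 := by rw [hs] at h1π; linarith
        exact (mul_eq_zero.1 this).resolve_right hc
      have h2z : u₂ π = 0 := by
        have : u₂ π * Real.cos β = 0 := by rw [hs] at h2π; linarith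
        exact (mul_eq_zero.1 this).resolve_right hc
      simp [hWdef, h1z, h2z]
    · exact (mul_eq_zero.1 key).resolve_left hs
  -- W is negative on (0, x₀]
  have hsubL : Set.Icc (0:ℝ) x₀ ⊆ Set.Icc (0:ℝ) π :=
    Set.Icc_subset_Icc le_rfl hx0lt.le
  have hsubR : Set.Icc x₀ π ⊆ Set.Icc (0:ℝ) π :=
    Set.Icc_subset_Icc hx0pos.le le_rfl
  have hantiW : StrictAntiOn W (Set.Icc 0 x₀) := by
    apply strictAntiOn_of_deriv_neg (convex_Icc _ _)
    · exact fun x hx => (hWderiv x (hsubL hx)).continuousAt.continuousWithinAt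
    · intro x hx
      rw [interior_Icc] at hx
      have hxI : x ∈ Set.Icc (0:ℝ) π := hsubL ⟨hx.1.le, hx.2.le⟩
      rw [(hWderiv x hxI).deriv]
      have h1 := hu₁pos x ⟨hx.1, hx.2.trans hx0lt⟩
      have h2 := hu₂pos x hx
      exact mul_neg_of_neg_of_pos (by linarith) (mul_pos h1 h2)
  have hmonoW : StrictMonoOn W (Set.Icc x₀ π) := by
    apply strictMonoOn_of_deriv_pos (convex_Icc _ _)
    · exact fun x hx => (hWderiv x (hsubR hx)).continuousAt.continuousWithinAt
    · intro x hx
      rw [interior_Icc] at hx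
      have hxI : x ∈ Set.Icc (0:ℝ) π := hsubR ⟨hx.1.le, hx.2.le⟩
      rw [(hWderiv x hxI).deriv]
      have h1 := hu₁pos x ⟨hx0pos.trans hx.1, hx.2⟩
      have h2 := hu₂neg x hx
      exact mul_pos_of_neg_of_neg (by linarith) (mul_neg_of_pos_of_neg h1 h2)
  have hWnegL : ∀ x ∈ Set.Ioc (0:ℝ) x₀, W x < 0 := by
    intro x hx
    have := hantiW (Set.left_mem_Icc.2 (hx0pos.le)) ⟨hx.1.le, hx.2⟩ hx.1
    linarith [hW0]
  have hWnegR : ∀ x ∈ Set.Ico x₀ π, W x < 0 := by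
    intro x hx
    have := hmonoW ⟨hx.1, hx.2.le⟩ (Set.right_mem_Icc.2 (hx0lt.le)) hx.2
    linarith [hWπ]
  -- the quotient v = u₂ / u₁
  have hvderiv : ∀ x ∈ Set.Ioo (0:ℝ) π,
      HasDerivAt (fun y => u₂ y / u₁ y)
        ((u₂' x * u₁ x - u₂ x * u₁' x) / (u₁ x) ^ 2) x := by
    intro x hx
    exact (hu₂ x ⟨hx.1.le, hx.2.le⟩).div (hu₁ x ⟨hx.1.le, hx.2.le⟩)
      (ne_of_gt (hu₁pos x hx))
  have hvneg : ∀ x ∈ Set.Ioo (0:ℝ) π, W x < 0 →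
      deriv (fun y => u₂ y / u₁ y) x < 0 := by
    intro x hx hWx
    rw [(hvderiv x hx).deriv]
    have h1 := hu₁pos x hx
    have hpx := hppos x ⟨hx.1.le, hx.2.le⟩
    apply div_neg_of_neg_of_pos _ (by positivity)
    simp only [hWdef] at hWx
    nlinarith
  constructor
  · -- first interval: u₂ = u₁ there, so v = 1
    have hanti_v : StrictAntiOn (fun y => u₂ y / u₁ y) (Set.Ioo 0 x₀) := by
      apply strictAntiOn_of_deriv_neg (convex_Ioo _ _)
      · intro x hx
        have hx' : x ∈ Set.Ioo (0:ℝ) π := ⟨hx.1, hx.2.trans hx0lt⟩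
        exact (hvderiv x hx').continuousAt.continuousWithinAt
      · intro x hx
        rw [interior_Ioo] at hx
        have hx' : x ∈ Set.Ioo (0:ℝ) π := ⟨hx.1, hx.2.trans hx0lt⟩
        exact hvneg x hx' (hWnegL x ⟨hx.1, hx.2.le⟩)
    intro a ha b hb
    obtain ⟨haI, haE⟩ := ha
    obtain ⟨hbI, hbE⟩ := hb
    have hva : u₂ a / u₁ a = 1 := by
      have h1 := hu₁pos a ⟨haI.1, haI.2.trans hx0lt⟩
      have h2 := hu₂pos a haI
      have hfac : (u₂ a - u₁ a) * (u₂ a + u₁ a) = 0 := by linear_combination haE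
      rcases mul_eq_zero.1 hfac with h | h
      · rw [div_eq_iff (ne_of_gt h1)]; linarith
      · linarith
    have hvb : u₂ b / u₁ b = 1 := by
      have h1 := hu₁pos b ⟨hbI.1, hbI.2.trans hx0lt⟩
      have h2 := hu₂pos b hbI
      have hfac : (u₂ b - u₁ b) * (u₂ b + u₁ b) = 0 := by linear_combination hbE
      rcases mul_eq_zero.1 hfac with h | h
      · rw [div_eq_iff (ne_of_gt h1)]; linarith
      · linarith
    exact hanti_v.injOn haI hbI (by rw [hva, hvb])
  · -- second interval: points must lie in (x₀, π) and v = -1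
    have hanti_v : StrictAntiOn (fun y => u₂ y / u₁ y) (Set.Ioo x₀ π) := by
      apply strictAntiOn_of_deriv_neg (convex_Ioo _ _)
      · intro x hx
        have hx' : x ∈ Set.Ioo (0:ℝ) π := ⟨hx0pos.trans hx.1, hx.2⟩
        exact (hvderiv x hx').continuousAt.continuousWithinAt
      · intro x hx
        rw [interior_Ioo] at hx
        have hx' : x ∈ Set.Ioo (0:ℝ) π := ⟨hx0pos.trans hx.1, hx.2⟩
        exact hvneg x hx' (hWnegR x ⟨hx.1.le, hx.2⟩)
    have hne : ∀ x, x ∈ {x ∈ Set.Ico x₀ π | u₂ x ^ 2 - u₁ x ^ 2 = 0} →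
        x ∈ Set.Ioo x₀ π := by
      intro x hx
      obtain ⟨hxI, hxE⟩ := hx
      rcases eq_or_lt_of_le hxI.1 with h | h
      · exfalso
        have h1 := hu₁pos x ⟨hx0pos.trans_le hxI.1, hxI.2⟩
        rw [← h] at hxE h1
        rw [hu₂zero] at hxE
        nlinarith
      · exact ⟨h, hxI.2⟩
    intro a ha b hb
    have haI := hne a ha
    have hbI := hne b hb
    have hva : u₂ a / u₁ a = -1 := by
      have h1 := hu₁pos a ⟨hx0pos.trans haI.1, haI.2⟩
      have h2 := hu₂neg a haI
      have hfac : (u₂ a - u₁ a) * (u₂ a + u₁ a) = 0 := by linear_combination ha.2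
      rcases mul_eq_zero.1 hfac with h | h
      · linarith
      · rw [div_eq_iff (ne_of_gt h1)]; linarith
    have hvb : u₂ b / u₁ b = -1 := by
      have h1 := hu₁pos b ⟨hx0pos.trans hbI.1, hbI.2⟩
      have h2 := hu₂neg b hbI
      have hfac : (u₂ b - u₁ b) * (u₂ b + u₁ b) = 0 := by linear_combination hb.2
      rcases mul_eq_zero.1 hfac with h | h
      · linarith
      · rw [div_eq_iff (ne_of_gt h1)]; linarith
    exact hanti_v.injOn haI hbI (by rw [hva, hvb])
end

section
/- Suppose $r>0$ and $s\ge 0$ satisfy $\tan(\pi r) = r/y_1$ and $\tanh(\pi s)= s/y_1$ with both $r=r(y_1)$ and $s=s(y_1)$ differentiable in $y_1$, $\pi r \notin \frac{\pi}{2}+\pi\mathbb{Z}$. Then $\frac{d}{dy_1}(r^2+s^2) = \frac{2}{\pi}\left(\frac{s^2}{s^2-\eta} - \frac{r^2}{r^2+\eta}\right)$ where $\eta = y_1(y_1 - 1/\pi)$, provided $s^2 \neq \eta$. -/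
set_option maxHeartbeats 1000000

open Real Set

lemma Real.hasDerivAt_tanh' (x : ℝ) :
    HasDerivAt Real.tanh (1 - Real.tanh x ^ 2) x := by
  have hc : Real.cosh x ≠ 0 := (Real.cosh_pos x).ne'
  have h := (Real.hasDerivAt_sinh x).div (Real.hasDerivAt_cosh x) hc
  have hfun : (Real.sinh / Real.cosh) = Real.tanh := by
    funext y; rw [Pi.div_apply, Real.tanh_eq_sinh_div_cosh]
  rw [hfun] at h
  refine h.congr_deriv ?_
  rw [Real.tanh_eq_sinh_div_cosh]
  have h1 : Real.cosh x ^ 2 - Real.sinh x ^ 2 = 1 := Real.cosh_sq_sub_sinh_sq x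
  field_simp

theorem gap_derivative_formula (r s : ℝ → ℝ) (y₁ : ℝ) (hy₁ : 0 < y₁)
    (hr : DifferentiableAt ℝ r y₁) (hs : DifferentiableAt ℝ s y₁)
    (hrpos : 0 < r y₁) (hsnonneg : 0 ≤ s y₁)
    (hreq : ∀ y ∈ Set.Ioi (0 : ℝ), Real.tan (π * r y) = r y / y)
    (hseq : ∀ y ∈ Set.Ioi (0 : ℝ), Real.tanh (π * s y) = s y / y)
    (hreg : ∀ k : ℤ, π * r y₁ ≠ π / 2 + k * π)
    (hne : (s y₁) ^ 2 ≠ y₁ * (y₁ - 1 / π)) :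
    deriv (fun y => r y ^ 2 + s y ^ 2) y₁ =
      (2 / π) * ((s y₁) ^ 2 / ((s y₁) ^ 2 - y₁ * (y₁ - 1 / π)) -
        (r y₁) ^ 2 / ((r y₁) ^ 2 + y₁ * (y₁ - 1 / π))) := by
  have hy0 : y₁ ≠ 0 := hy₁.ne'
  have hπ : (0:ℝ) < π := Real.pi_pos
  have hmem : Ioi (0:ℝ) ∈ nhds y₁ := isOpen_Ioi.mem_nhds hy₁
  set a := r y₁ with ha
  set b := s y₁ with hb
  set r' := deriv r y₁ with hr'
  set s' := deriv s y₁ with hs'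
  have hπ0 : π ≠ 0 := hπ.ne'
  have hDeq : π * (y₁ ^ 2 + a ^ 2) - y₁ = π * (a ^ 2 + y₁ * (y₁ - 1 / π)) := by
    field_simp; ring
  have hEeq : π * (y₁ ^ 2 - b ^ 2) - y₁ = -(π * (b ^ 2 - y₁ * (y₁ - 1 / π))) := by
    field_simp; ring
  have hcos : Real.cos (π * a) ≠ 0 := by
    rw [Real.cos_ne_zero_iff]
    intro k
    have := hreg k
    intro h
    apply this
    rw [h]; push_cast; ring
  have hta : Real.tan (π * a) = a / y₁ := hreq y₁ hy₁
  have htb : Real.tanh (π * b) = b / y₁ := hseq y₁ hy₁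
  -- derivative equation for r
  have h1 : HasDerivAt (fun y => Real.tan (π * r y))
      ((1 / Real.cos (π * a) ^ 2) * (π * r')) y₁ :=
    by have := (Real.hasDerivAt_tan hcos).comp y₁ (hr.hasDerivAt.const_mul π); exact this
  have h2 : HasDerivAt (fun y => r y / y) ((r' * y₁ - a * 1) / y₁ ^ 2) y₁ :=
    hr.hasDerivAt.div (hasDerivAt_id y₁) hy0
  have hev : (fun y => Real.tan (π * r y)) =ᶠ[nhds y₁] (fun y => r y / y) :=
    Filter.eventuallyEq_of_mem hmem (fun y hy => hreq y hy)
  have eqr : (1 / Real.cos (π * a) ^ 2) * (π * r') = (r' * y₁ - a * 1) / y₁ ^ 2 :=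
    h1.unique (h2.congr_of_eventuallyEq hev)
  have hc2 : (1:ℝ) / Real.cos (π * a) ^ 2 = 1 + (a / y₁) ^ 2 := by
    rw [one_div, ← Real.inv_one_add_tan_sq hcos, inv_inv, hta]
  rw [hc2] at eqr
  -- r' * D = -a  where D = π*(y₁^2+a^2) - y₁
  have key_r : r' * (π * (y₁ ^ 2 + a ^ 2) - y₁) = -a := by
    have h' : (1 + (a / y₁) ^ 2) * (π * r') * y₁ ^ 2 = r' * y₁ - a * 1 := by
      rw [eqr]; field_simp
    field_simp at h'
    nlinarith [h']
  have hD : π * (y₁ ^ 2 + a ^ 2) - y₁ ≠ 0 := by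
    intro h
    rw [h, mul_zero] at key_r
    exact hrpos.ne' (by linarith)
  -- derivative equation for s
  have h3 : HasDerivAt (fun y => Real.tanh (π * s y))
      ((1 - Real.tanh (π * b) ^ 2) * (π * s')) y₁ :=
    by have := (Real.hasDerivAt_tanh' (π * b)).comp y₁ (hs.hasDerivAt.const_mul π); exact this
  have h4 : HasDerivAt (fun y => s y / y) ((s' * y₁ - b * 1) / y₁ ^ 2) y₁ :=
    hs.hasDerivAt.div (hasDerivAt_id y₁) hy0
  have hev2 : (fun y => Real.tanh (π * s y)) =ᶠ[nhds y₁] (fun y => s y / y) :=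
    Filter.eventuallyEq_of_mem hmem (fun y hy => hseq y hy)
  have eqs : (1 - Real.tanh (π * b) ^ 2) * (π * s') = (s' * y₁ - b * 1) / y₁ ^ 2 :=
    h3.unique (h4.congr_of_eventuallyEq hev2)
  rw [htb] at eqs
  have key_s : s' * (π * (y₁ ^ 2 - b ^ 2) - y₁) = -b := by
    have h' : (1 - (b / y₁) ^ 2) * (π * s') * y₁ ^ 2 = s' * y₁ - b * 1 := by
      rw [eqs]; field_simp
    field_simp at h'
    nlinarith [h']
  have hE' : b ^ 2 - y₁ * (y₁ - 1 / π) ≠ 0 := sub_ne_zero.mpr hne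
  have hE : π * (y₁ ^ 2 - b ^ 2) - y₁ ≠ 0 := by
    rw [hEeq]
    exact neg_ne_zero.mpr (mul_ne_zero hπ.ne' hE')
  -- total derivative
  have hd : HasDerivAt (fun y => r y ^ 2 + s y ^ 2)
      ((2 * a ^ 1 * r') + (2 * b ^ 1 * s')) y₁ := by
    have := ((hr.hasDerivAt.pow 2).add (hs.hasDerivAt.pow 2))
    exact this.congr_deriv (by simp; rfl)
  rw [hd.deriv]
  have hD' : a ^ 2 + y₁ * (y₁ - 1 / π) ≠ 0 := by
    intro h
    apply hD
    rw [hDeq, h, mul_zero]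
  rw [hDeq] at key_r
  rw [hEeq] at key_s
  have hr'v : r' = -a / (π * (a ^ 2 + y₁ * (y₁ - 1 / π))) := by
    rw [eq_div_iff (mul_ne_zero hπ0 hD')]
    linarith [key_r]
  have hs'v : s' = b / (π * (b ^ 2 - y₁ * (y₁ - 1 / π))) := by
    rw [eq_div_iff (mul_ne_zero hπ0 hE')]
    linarith [key_s]
  rw [hr'v, hs'v]
  field_simp
  ring
end
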